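/- In the Threshold Game with q = 1/4 and ε = 1/9 there is no pure Nash equilibrium: for every (p_1, p_2) ∈ [0,1]×[0,1], either there exists p'_1 ∈ [0,1] with U_1(p'_1, p_2) > U_1(p_1, p_2), or there exists p'_2 ∈ [0,1] with U_2(p_1, p'_2) > U_2(p_1, p_2). -/

import Mathlib

/-- Expected value of an agent conditioned on requesting under the `p`-threshold strategy,
for the two-point distribution taking value `1` w.p. `q = 1/4` and value `ε = 1/9` w.p. `3/4`. -/
noncomputable def Vtwo (p : ℝ) : ℝ :=
  if p ≤ 1 / 4 then 1 else (1 / 4 + (1 / 9) * (p - 1 / 4)) / p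

/-- Long-run per-round win rate of an agent requesting with probability `a` against an
opponent requesting with probability `b`, in the two-agent symmetric DMMF process. -/
noncomputable def winRate (a b : ℝ) : ℝ :=
  if a < b * (1 - a) then a
  else if b < a * (1 - b) then a * (1 - b)
  else (1 - (1 - a) * (1 - b)) / 2

/-- Payoff of player 1 in the Threshold Game. -/
noncomputable def Uone (p₁ p₂ : ℝ) : ℝ := Vtwo p₁ * winRate p₁ p₂

/-- Payoff of player 2 in the Threshold Game. -/
noncomputable def Utwo (p₁ p₂ : ℝ) : ℝ := Vtwo p₂ * winRate p₂ p₁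

lemma vle {p : ℝ} (h : p ≤ 1/4) : Vtwo p = 1 := if_pos h
lemma vgt {p : ℝ} (h : 1/4 < p) : Vtwo p = (1/4 + (1/9)*(p-1/4))/p := by
  rw [Vtwo, if_neg (by push_neg; linarith)]

lemma wA {a b : ℝ} (h : a < b*(1-a)) : winRate a b = a := if_pos h
lemma wB {a b : ℝ} (h1 : ¬ a < b*(1-a)) (h2 : b < a*(1-b)) : winRate a b = a*(1-b) := by
  rw [winRate, if_neg h1, if_pos h2]
lemma wC {a b : ℝ} (h1 : ¬ a < b*(1-a)) (h2 : ¬ b < a*(1-b)) :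
    winRate a b = (1-(1-a)*(1-b))/2 := by
  rw [winRate, if_neg h1, if_neg h2]

/-- Value of deviating to `b/(1+b)` against opponent `b` (for `b > 1/3`). -/
lemma dev_main {b : ℝ} (hb : 1/3 < b) (hb1 : b ≤ 1) :
    Vtwo (b/(1+b)) * winRate (b/(1+b)) b = (2 + b/(1+b))/9 := by
  have h0 : (0:ℝ) < 1 + b := by linarith
  have hc : 1/4 < b/(1+b) := by rw [lt_div_iff₀ h0]; linarith
  have hcb : b * (1 - b/(1+b)) = b/(1+b) := by field_simp; ring
  have h1 : ¬ b/(1+b) < b * (1 - b/(1+b)) := by rw [hcb]; exact lt_irrefl _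
  have h2 : ¬ b < (b/(1+b)) * (1 - b) := by
    push_neg
    rw [div_mul_eq_mul_div, div_le_iff₀ h0]
    nlinarith
  rw [vgt hc, wC h1 h2]
  have hmid : (1 - (1 - b/(1+b)) * (1 - b)) / 2 = b/(1+b) := by field_simp; ring
  rw [hmid]
  have hne : b/(1+b) ≠ 0 := by positivity
  field_simp
  ring

/-- Value of deviating to `1/4` against opponent `y ∈ [1/5, 1/3]`. -/
lemma dev_quarter {y : ℝ} (h1 : 1/5 ≤ y) (h2 : y ≤ 1/3) :
    Vtwo (1/4) * winRate (1/4) y = (1 + 3*y)/8 := by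
  have hA : ¬ (1/4 : ℝ) < y * (1 - 1/4) := by push_neg; linarith
  have hB : ¬ y < (1/4 : ℝ) * (1 - y) := by push_neg; linarith
  rw [vle le_rfl, wC hA hB]; ring

/-- Value of deviating to `1` against opponent `y < 1/2`. -/
lemma dev_one {y : ℝ} (h : y < 1/2) : Vtwo 1 * winRate 1 y = (1 - y)/3 := by
  have hA : ¬ (1:ℝ) < y * (1 - 1) := by push_neg; nlinarith
  have hB : y < (1:ℝ) * (1 - 1) + (1 - y) := by linarith
  have hB' : y < (1:ℝ) * (1 - y) := by linarith
  rw [vgt (by norm_num), wB hA hB']; norm_num; ring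

lemma dev_half : Vtwo (1/2) * winRate (1/2) 1 = 5/18 := by
  have hA : ¬ (1/2:ℝ) < 1 * (1 - 1/2) := by norm_num
  have hB : ¬ (1:ℝ) < (1/2) * (1 - 1) := by norm_num
  rw [vgt (by norm_num), wC hA hB]; norm_num

/-- Any strategy `x < 1/2` against an opponent playing `1` is beaten by deviating to `1/2`. -/
lemma small_vs_one {x : ℝ} (h0 : 0 ≤ x) (h : x < 1/2) :
    Vtwo x * winRate x 1 < Vtwo (1/2) * winRate (1/2) 1 := by
  rw [dev_half, wA (by nlinarith : x < 1 * (1 - x))]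
  by_cases hx : x ≤ 1/4
  · rw [vle hx]; linarith
  · push_neg at hx
    rw [vgt hx, div_mul_eq_mul_div, div_lt_iff₀ (by linarith : (0:ℝ) < x)]
    nlinarith

/-- Against an opponent playing `y ≤ 1/4`, any `x < 1` is beaten by deviating to `1`. -/
lemma dev_to_one {x y : ℝ} (hx0 : 0 ≤ x) (hx1 : x < 1) (hy0 : 0 ≤ y) (hy : y ≤ 1/4) :
    Vtwo x * winRate x y < Vtwo 1 * winRate 1 y := by
  rw [dev_one (by linarith)]
  by_cases h1 : x < y * (1 - x)
  · rw [wA h1, vle (by nlinarith), one_mul]; nlinarith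
  · by_cases h2 : y < x * (1 - y)
    · rw [wB h1 h2]
      by_cases hx : x ≤ 1/4
      · rw [vle hx]; nlinarith
      · push_neg at hx
        rw [vgt hx, div_mul_eq_mul_div, div_lt_iff₀ (by linarith : (0:ℝ) < x)]
        nlinarith
    · rw [wC h1 h2]; push_neg at h1 h2
      by_cases hx : x ≤ 1/4
      · rw [vle hx]; nlinarith
      · push_neg at hx
        rw [vgt hx, div_mul_eq_mul_div, div_lt_iff₀ (by linarith : (0:ℝ) < x)]
        nlinarith [mul_le_of_le_one_right hy0 (le_of_lt hx1)]


/-- Non-existence of pure Nash equilibria in the Threshold Game with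
`q = 1/4` and `ε = 1/9`: for every profile `(p₁, p₂) ∈ [0,1]²`, some player has a
profitable deviation. -/
theorem threshold_game_no_pure_nash :
    ∀ p₁ ∈ Set.Icc (0 : ℝ) 1, ∀ p₂ ∈ Set.Icc (0 : ℝ) 1,
      (∃ p₁' ∈ Set.Icc (0 : ℝ) 1, Uone p₁ p₂ < Uone p₁' p₂) ∨
      (∃ p₂' ∈ Set.Icc (0 : ℝ) 1, Utwo p₁ p₂ < Utwo p₁ p₂') := by
  intro p₁ hp₁ p₂ hp₂
  obtain ⟨ha0, ha1⟩ := hp₁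
  obtain ⟨hb0, hb1⟩ := hp₂
  simp only [Uone, Utwo]
  by_cases hb : p₂ ≤ 1/4
  · rcases lt_or_eq_of_le ha1 with ha | ha
    · exact Or.inl ⟨1, ⟨by norm_num, le_rfl⟩, dev_to_one ha0 ha hb0 hb⟩
    · subst ha
      exact Or.inr ⟨1/2, ⟨by norm_num, by norm_num⟩, small_vs_one hb0 (by linarith)⟩
  · push_neg at hb
    by_cases ha : p₁ ≤ 1/4
    · rcases lt_or_eq_of_le hb1 with hb' | hb'
      · exact Or.inr ⟨1, ⟨by norm_num, le_rfl⟩, dev_to_one hb0 hb' ha0 (by linarith)⟩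
      · subst hb'
        exact Or.inl ⟨1/2, ⟨by norm_num, by norm_num⟩, small_vs_one ha0 (by linarith)⟩
    · push_neg at ha
      have hb0' : (0:ℝ) < p₂ := by linarith
      have ha0' : (0:ℝ) < p₁ := by linarith
      by_cases h1 : p₁ < p₂ * (1 - p₁)
      · -- C4a : player 1 deviates up to p₂/(1+p₂)
        left
        have hb3 : 1/3 < p₂ := by
          nlinarith [mul_pos hb0' (show (0:ℝ) < p₁ - 1/4 by linarith)]
        refine ⟨p₂/(1+p₂), ⟨by positivity, by
          rw [div_le_one (by linarith : (0:ℝ) < 1 + p₂)]; linarith⟩, ?_⟩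
        rw [dev_main hb3 hb1, wA h1, vgt ha,
          div_mul_cancel₀ _ (ne_of_gt ha0')]
        have hf : p₁ < p₂/(1+p₂) := by
          rw [lt_div_iff₀ (by linarith : (0:ℝ) < 1 + p₂)]; nlinarith
        linarith
      · by_cases h2 : p₂ < p₁ * (1 - p₂)
        · rcases lt_or_eq_of_le ha1 with hlt | heq
          · -- C4b-i : player 1 deviates to 1
            left
            refine ⟨1, ⟨by norm_num, le_rfl⟩, ?_⟩
            have hb2 : p₂ < 1/2 := by nlinarith
            rw [dev_one hb2, wB h1 h2, vgt ha, div_mul_eq_mul_div,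
              div_lt_iff₀ ha0']
            nlinarith
          · -- C4b-ii : p₁ = 1, player 2 deviates to 1/2
            right
            subst heq
            have hb2 : p₂ < 1/2 := by nlinarith
            exact ⟨1/2, ⟨by norm_num, by norm_num⟩, small_vs_one hb0 hb2⟩
        · -- middle region
          have h1' : p₂ * (1 - p₁) ≤ p₁ := not_lt.mp h1
          rcases eq_or_lt_of_le h1' with heq | hlt
          · -- C4c-ii : p₁ = p₂(1-p₁), player 2 deviates down
            right
            have hm : (1 - (1 - p₂) * (1 - p₁)) / 2 = p₁ := by
              linear_combination heq / 2
            have hcur : (1/4 + (1/9)*(p₂ - 1/4))/p₂ * p₁ = (2 - p₁)/9 := by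
              rw [div_mul_eq_mul_div, div_eq_div_iff (ne_of_gt hb0') (by norm_num : (9:ℝ) ≠ 0)]
              linear_combination (-2 : ℝ) * heq
            by_cases h3 : p₁ ≤ 1/3
            · refine ⟨1/4, ⟨by norm_num, by norm_num⟩, ?_⟩
              rw [dev_quarter (by linarith : 1/5 ≤ p₁) h3, wC h2 h1, vgt hb, hm, hcur]
              linarith
            · push_neg at h3
              refine ⟨p₁/(1+p₁), ⟨by positivity, by
                rw [div_le_one (by linarith : (0:ℝ) < 1 + p₁)]; linarith⟩, ?_⟩
              rw [dev_main h3 ha1, wC h2 h1, vgt hb, hm, hcur]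
              have hcpos : (0:ℝ) < p₁/(1+p₁) := by positivity
              linarith
          · -- C4c-i : player 1 deviates down
            left
            by_cases h3 : p₂ ≤ 1/3
            · refine ⟨1/4, ⟨by norm_num, by norm_num⟩, ?_⟩
              rw [dev_quarter (by linarith : 1/5 ≤ p₂) h3, wC h1 h2, vgt ha,
                div_mul_eq_mul_div, div_lt_iff₀ ha0']
              have h2' : p₁ * (1 - p₂) ≤ p₂ := not_lt.mp h2
              nlinarith [mul_pos (show (0:ℝ) < p₁ - 1/4 by linarith)
                  (show (0:ℝ) < p₂ - 1/4 by linarith),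
                mul_nonneg (show (0:ℝ) ≤ p₂ - p₁*(1-p₂) by linarith)
                  (show (0:ℝ) ≤ p₁ - 1/4 by linarith),
                mul_nonneg (show (0:ℝ) ≤ p₁ - p₂*(1-p₁) by linarith)
                  (show (0:ℝ) ≤ 1/3 - p₂ by linarith)]
            · push_neg at h3
              refine ⟨p₂/(1+p₂), ⟨by positivity, by
                rw [div_le_one (by linarith : (0:ℝ) < 1 + p₂)]; linarith⟩, ?_⟩
              rw [dev_main h3 hb1, wC h1 h2, vgt ha]
              have hrw : (2 + p₂/(1+p₂))/9 = (2 + 3*p₂)*1/(9*(1+p₂)) := by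
                field_simp; ring
              rw [hrw, div_mul_eq_mul_div, div_lt_div_iff₀ ha0'
                (by linarith : (0:ℝ) < 9*(1+p₂))]
              have hfac : (0:ℝ) < (p₁*(1+p₂) - p₂) * ((p₂-1)*p₁ + 2*(1+p₂)) := by
                apply mul_pos
                · nlinarith
                · nlinarith
              nlinarith [hfac]
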